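/- Consider f(x) = (x₂, 0), G(x) = (0, x₂²) on ℝ², h(x) = 1 − x₁² − x₂², α(r) = r, and the min-norm controller magnitude |u₂*(x)| = (2x₁x₂ − h(x))/(2x₂³) on D₋ = {x in the unit disk | −2x₁x₂ + h(x) < 0}. Then |u₂*| is unbounded near (1,0): for every M > 0 there exists x ∈ D₋ with ‖x − (1,0)‖ < 1/M and |u₂*(x)| > M. -/
import Mathlib


theorem stmt_14 :
    ∀ M : ℝ, 0 < M → ∃ x : ℝ × ℝ,
      x.1 ^ 2 + x.2 ^ 2 ≤ 1 ∧
      -2 * x.1 * x.2 + (1 - x.1 ^ 2 - x.2 ^ 2) < 0 ∧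
      dist x ((1 : ℝ), (0 : ℝ)) < 1 / M ∧
      M < (2 * x.1 * x.2 - (1 - x.1 ^ 2 - x.2 ^ 2)) / (2 * x.2 ^ 3) := by
  intro M hM
  set ε : ℝ := min (1/2) (1/(4*M)) with hε
  have he0 : 0 < ε := lt_min (by norm_num) (by positivity)
  have he1 : ε ≤ 1/2 := min_le_left _ _
  have he2 : ε ≤ 1/(4*M) := min_le_right _ _
  have he2' : ε * (4*M) ≤ 1 := by
    rw [div_eq_mul_inv, one_mul] at he2
    calc ε * (4*M) ≤ (4*M)⁻¹ * (4*M) := by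
          apply mul_le_mul_of_nonneg_right he2 (by positivity)
      _ = 1 := by field_simp
  refine ⟨(1 - ε^2, ε), ?_, ?_, ?_, ?_⟩
  · simp only
    nlinarith [mul_nonneg (sq_nonneg ε) (by nlinarith : (0:ℝ) ≤ 1 - ε^2)]
  · simp only
    nlinarith [sq_nonneg ε, mul_pos he0 he0]
  · rw [Prod.dist_eq]
    simp only [Real.dist_eq]
    have h1M : ε < 1/M := by
      calc ε ≤ 1/(4*M) := he2
        _ < 1/M := by
          rw [div_lt_div_iff₀ (by positivity) hM]
          nlinarith
    have hsq : ε^2 < 1/M := by nlinarith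
    apply max_lt
    · rw [abs_of_nonpos (by nlinarith [sq_nonneg ε])]
      simpa using hsq
    · rw [sub_zero, abs_of_pos he0]
      exact h1M
  · simp only
    rw [lt_div_iff₀ (by positivity)]
    nlinarith [mul_pos he0 he0, mul_pos (mul_pos he0 he0) he0, sq_nonneg ε]
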